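/- Every nonempty finite intersection in the category of sets is absolute: if B, B' ⊆ A are subsets with B ∩ B' ≠ ∅, then the pullback square formed by the inclusions of B ∩ B', B, B' into A is preserved by every functor from Set to any category. -/

import Mathlib

open CategoryTheory Limits

theorem stmt13 {A : Type u} (B B' : Set A) (hne : (B ∩ B').Nonempty)
    {D : Type v} [Category.{w} D] (F : Type u ⥤ D) :
    IsPullback
      (F.map (X := ↥(B ∩ B')) (Y := ↥B) (TypeCat.ofHom (fun x => ⟨(x : A), x.2.1⟩)))
      (F.map (X := ↥(B ∩ B')) (Y := ↥B') (TypeCat.ofHom (fun x => ⟨(x : A), x.2.2⟩)))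
      (F.map (X := ↥B) (Y := A) (TypeCat.ofHom (fun x => (x : A))))
      (F.map (X := ↥B') (Y := A) (TypeCat.ofHom (fun x => (x : A)))) := by
  classical
  obtain ⟨a0, ha0⟩ := hne
  set p : (↥(B ∩ B') : Type u) ⟶ ↥B := TypeCat.ofHom fun x => ⟨(x : A), x.2.1⟩ with hpdef
  set q : (↥(B ∩ B') : Type u) ⟶ ↥B' := TypeCat.ofHom fun x => ⟨(x : A), x.2.2⟩ with hqdef
  set f : (↥B : Type u) ⟶ A := TypeCat.ofHom fun x => (x : A) with hfdef
  set g : (↥B' : Type u) ⟶ A := TypeCat.ofHom fun x => (x : A) with hgdef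
  let u : (↥B : Type u) ⟶ ↥(B ∩ B') :=
    TypeCat.ofHom fun b => if h : (b : A) ∈ B' then ⟨(b : A), b.2, h⟩ else ⟨a0, ha0⟩
  let t1 : A ⟶ (↥B : Type u) := TypeCat.ofHom fun a => if h : a ∈ B ∩ B' then ⟨a, h.1⟩ else ⟨a0, ha0.1⟩
  let t2 : A ⟶ (↥B : Type u) := TypeCat.ofHom fun a => if h : a ∈ B then ⟨a, h⟩ else ⟨a0, ha0.1⟩
  let s2 : A ⟶ (↥B' : Type u) := TypeCat.ofHom fun a => if h : a ∈ B' then ⟨a, h⟩ else ⟨a0, ha0.2⟩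
  have comm : F.map p ≫ F.map f = F.map q ≫ F.map g := by
    rw [← F.map_comp, ← F.map_comp]; rfl
  -- set-level equations
  have e1 : u ≫ p = f ≫ t1 := by
    ext b
    simp only [TypeCat.Fun.toFun_apply, types_comp_apply, TypeCat.ofHom_apply, p, q, f, g, u, t1]
    by_cases h : (b : A) ∈ B'
    · rw [dif_pos h, dif_pos ⟨b.2, h⟩]
    · rw [dif_neg h, dif_neg (fun hh => h hh.2)]
  have e2 : g ≫ t1 = g ≫ t2 := by
    ext b
    simp only [TypeCat.Fun.toFun_apply, types_comp_apply, TypeCat.ofHom_apply, p, q, f, g, t1, t2]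
    by_cases h : (b : A) ∈ B
    · rw [dif_pos ⟨h, b.2⟩, dif_pos h]
    · rw [dif_neg (fun hh => h hh.1), dif_neg h]
  have e3 : f ≫ t2 = 𝟙 _ := by
    ext b
    simp only [TypeCat.Fun.toFun_apply, types_comp_apply, TypeCat.ofHom_apply, p, q, f, g, t2, types_id_apply]
    rw [dif_pos b.2]
  have e4 : u ≫ q = f ≫ s2 := by
    ext b
    simp only [TypeCat.Fun.toFun_apply, types_comp_apply, TypeCat.ofHom_apply, p, q, f, g, u, s2]
    by_cases h : (b : A) ∈ B'
    · rw [dif_pos h, dif_pos h]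
    · rw [dif_neg h, dif_neg h]
  have e5 : g ≫ s2 = 𝟙 _ := by
    ext b
    simp only [TypeCat.Fun.toFun_apply, types_comp_apply, TypeCat.ofHom_apply, p, q, f, g, s2, types_id_apply]
    rw [dif_pos b.2]
  have e6 : p ≫ u = 𝟙 _ := by
    ext x
    simp only [TypeCat.Fun.toFun_apply, types_comp_apply, TypeCat.ofHom_apply, p, q, f, g, u, p, types_id_apply]
    rw [dif_pos x.2.2]
  apply IsPullback.of_isLimit (c := PullbackCone.mk (F.map p) (F.map q) comm)
  refine PullbackCone.IsLimit.mk comm (fun s => s.fst ≫ F.map u) ?_ ?_ ?_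
  · intro s
    have cone := s.condition
    calc (s.fst ≫ F.map u) ≫ F.map p = s.fst ≫ F.map (u ≫ p) := by
          rw [Category.assoc, F.map_comp]
      _ = s.fst ≫ F.map f ≫ F.map t1 := by rw [e1, F.map_comp]
      _ = s.snd ≫ F.map g ≫ F.map t1 := by
          rw [← Category.assoc, ← Category.assoc, cone]
      _ = s.snd ≫ F.map (g ≫ t1) := by rw [F.map_comp]
      _ = s.snd ≫ F.map g ≫ F.map t2 := by rw [e2, F.map_comp]
      _ = s.fst ≫ F.map f ≫ F.map t2 := by
          rw [← Category.assoc, ← Category.assoc, cone]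
      _ = s.fst ≫ F.map (f ≫ t2) := by rw [F.map_comp]
      _ = s.fst := by rw [e3, F.map_id, Category.comp_id]
  · intro s
    have cone := s.condition
    calc (s.fst ≫ F.map u) ≫ F.map q = s.fst ≫ F.map (u ≫ q) := by
          rw [Category.assoc, F.map_comp]
      _ = s.fst ≫ F.map f ≫ F.map s2 := by rw [e4, F.map_comp]
      _ = s.snd ≫ F.map g ≫ F.map s2 := by
          rw [← Category.assoc, ← Category.assoc, cone]
      _ = s.snd ≫ F.map (g ≫ s2) := by rw [F.map_comp]
      _ = s.snd := by rw [e5, F.map_id, Category.comp_id]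
  · intro s m hm₁ _
    calc m = m ≫ F.map (p ≫ u) := by rw [e6, F.map_id, Category.comp_id]
      _ = (m ≫ F.map p) ≫ F.map u := by rw [F.map_comp, Category.assoc]
      _ = s.fst ≫ F.map u := by rw [hm₁]
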